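/- Let G be a graph on n vertices with signed adjacency matrix A, let c > 0, and set B = I_n + (c/√n)·A. Suppose B is positive semi-definite and C is any n×n matrix with CᵀC = B. If G has a clique of size k and δ < c(k-1)/√n, then C does not satisfy the RIP of order k with parameter δ. -/

import Mathlib

open Finset Matrix

/-- `Φ` satisfies the Restricted Isometry Property of order `k` with parameter `δ`
(real version). -/
def RIPR {m N : Type*} [Fintype m] [Fintype N] [DecidableEq N]
    (Φ : Matrix m N ℝ) (k : ℕ) (δ : ℝ) : Prop :=
  ∀ x : N → ℝ, (Finset.univ.filter fun i => x i ≠ 0).card ≤ k →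
    (1 - δ) * ∑ i, (x i) ^ 2 ≤ ∑ a, (Φ.mulVec x a) ^ 2 ∧
      ∑ a, (Φ.mulVec x a) ^ 2 ≤ (1 + δ) * ∑ i, (x i) ^ 2

/-- The signed adjacency matrix of a graph: zero diagonal, +1 for edges, -1 for
non-edges. -/
def signedAdj {n : ℕ} (G : SimpleGraph (Fin n)) [DecidableRel G.Adj] :
    Matrix (Fin n) (Fin n) ℝ :=
  fun i j => if i = j then 0 else if G.Adj i j then 1 else -1

/-- If B = I + (c/√n)A is PSD, CᵀC = B, G has a k-clique and
δ < c(k-1)/√n, then C fails the RIP of order k with parameter δ. -/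
theorem clique_breaks_rip {n k : ℕ} (hk : 1 ≤ k)
    (G : SimpleGraph (Fin n)) [DecidableRel G.Adj]
    (c δ : ℝ) (hc : 0 < c)
    (B C : Matrix (Fin n) (Fin n) ℝ)
    (hB : B = 1 + (c / Real.sqrt n) • signedAdj G)
    (hBpsd : B.PosSemidef) (hC : Cᵀ * C = B)
    (s : Finset (Fin n)) (hs : G.IsNClique k s)
    (hδ : δ < c * ((k : ℝ) - 1) / Real.sqrt n) :
    ¬ RIPR C k δ := by
  intro hrip
  -- the indicator vector of the clique
  set x : Fin n → ℝ := fun i => if i ∈ s then 1 else 0 with hx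
  have hcard : s.card = k := hs.card_eq
  have hsne : s.Nonempty := Finset.card_pos.mp (by omega)
  have hn : 0 < n := by
    obtain ⟨i, _⟩ := hsne
    exact i.pos
  have hsqrt : 0 < Real.sqrt n := Real.sqrt_pos.mpr (by exact_mod_cast hn)
  have hsum : ∀ f : Fin n → ℝ, ∑ i, x i * f i = ∑ i ∈ s, f i := by
    intro f
    simp [hx, ite_mul, Finset.sum_ite_mem]
  have hsupp : (Finset.univ.filter fun i => x i ≠ 0).card ≤ k := by
    have : (Finset.univ.filter fun i => x i ≠ 0) = s := by
      ext i; simp [hx]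
    rw [this, hcard]
  have hxx : ∑ i, (x i) ^ 2 = (k : ℝ) := by
    have := hsum x
    simp only [hx] at this ⊢
    simp [sq, this, hcard]
  have key : ∑ a, (C.mulVec x a) ^ 2 = x ⬝ᵥ B.mulVec x := by
    rw [← hC, ← Matrix.mulVec_mulVec, Matrix.dotProduct_mulVec,
      Matrix.vecMul_transpose]
    simp [dotProduct, sq]
  have hA : x ⬝ᵥ (signedAdj G).mulVec x = (k : ℝ) * ((k : ℝ) - 1) := by
    have hinner : ∀ i ∈ s, (signedAdj G).mulVec x i = (k : ℝ) - 1 := by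
      intro i hi
      show (∑ j, signedAdj G i j * x j) = (k : ℝ) - 1
      rw [show (∑ j, signedAdj G i j * x j) = ∑ j, x j * signedAdj G i j by
        simp [mul_comm], hsum]
      have h1 : ∀ j ∈ s, signedAdj G i j = 1 - (if i = j then 1 else 0) := by
        intro j hj
        unfold signedAdj
        by_cases h : i = j
        · simp [h]
        · simp [h, hs.1 hi hj h]
      rw [Finset.sum_congr rfl h1, Finset.sum_sub_distrib, Finset.sum_const,
        Finset.sum_ite_eq s i (fun _ => (1 : ℝ))]
      simp [hi, hcard]
    rw [show x ⬝ᵥ (signedAdj G).mulVec x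
        = ∑ i, x i * (signedAdj G).mulVec x i from rfl, hsum,
      Finset.sum_congr rfl hinner, Finset.sum_const, hcard]
    push_cast
    ring
  have hBx : x ⬝ᵥ B.mulVec x = (k : ℝ) + (c / Real.sqrt n) * ((k : ℝ) * ((k : ℝ) - 1)) := by
    rw [hB, Matrix.add_mulVec, Matrix.one_mulVec, Matrix.smul_mulVec,
      dotProduct_add, dotProduct_smul, hA]
    have : x ⬝ᵥ x = (k : ℝ) := by
      simpa [sq, dotProduct] using hxx
    rw [this]
    simp
  have hub := (hrip x hsupp).2
  rw [key, hBx, hxx] at hub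
  have hkpos : (0 : ℝ) < k := by exact_mod_cast hk
  have heq : c / Real.sqrt n * ((k : ℝ) * ((k : ℝ) - 1))
      = c * ((k : ℝ) - 1) / Real.sqrt n * (k : ℝ) := by ring
  have h2 : δ * k < c * ((k : ℝ) - 1) / Real.sqrt n * (k : ℝ) :=
    mul_lt_mul_of_pos_right hδ hkpos
  nlinarith
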